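/- β-law for xCL_fg: for all values v,w and every computation t, if v —w→ t then v ∘ w ≲ctx t and t ≲ctx v ∘ w (both in the computation sort). -/

import Mathlib

namespace FG

mutual
/-- Values of the fine-grain call-by-value combinatory logic xCL_fg. -/
inductive V : Type
  | I : V
  | K : V
  | S : V
  | K1 (t : C) : V
  | S1 (t : C) : V
  | S2 (s t : C) : V
/-- Computations of xCL_fg. -/
inductive C : Type
  | ret (v : V) : C            -- [v]
  | bull (t s : C) : C         -- t • s
  | rtri (v : V) (s : C) : C   -- v ▷ s
  | ltri (t : C) (v : V) : C   -- t ◁ v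
  | circ (v w : V) : C         -- v ∘ w
end

/-- Labeled transitions `v —u→ t` from values to computations (`LStep v u t`). -/
inductive LStep : V → V → C → Prop
  | S (v : V) : LStep .S v (.ret (.S1 (.ret v)))
  | S1 (t : C) (v : V) : LStep (.S1 t) v (.ret (.S2 t (.ret v)))
  | S2 (t s : C) (v : V) : LStep (.S2 t s) v (.bull (.ltri t v) (.ltri s v))
  | K (v : V) : LStep .K v (.ret (.K1 (.ret v)))
  | K1 (t : C) (v : V) : LStep (.K1 t) v t
  | I (v : V) : LStep .I v (.ret v)

/-- Unlabeled transitions from computations to values: `t → v`. -/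
inductive StepV : C → V → Prop
  | ret (v : V) : StepV (.ret v) v

/-- Unlabeled transitions from computations to computations: `t → t'`. -/
inductive StepC : C → C → Prop
  | bullL {t t' : C} (s : C) : StepC t t' → StepC (.bull t s) (.bull t' s)
  | bullV {t : C} {v : V} (s : C) : StepV t v → StepC (.bull t s) (.rtri v s)
  | ltriL {t t' : C} (v : V) : StepC t t' → StepC (.ltri t v) (.ltri t' v)
  | ltriV {t : C} {v : V} (w : V) : StepV t v → StepC (.ltri t w) (.circ v w)
  | rtriR {s s' : C} (v : V) : StepC s s' → StepC (.rtri v s) (.rtri v s')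
  | rtriV {s : C} {w : V} (v : V) : StepV s w → StepC (.rtri v s) (.circ v w)
  | circ {v w : V} {t : C} : LStep v w t → StepC (.circ v w) t

/-- `t ⇒ t'` between computations. -/
def StepsC : C → C → Prop := Relation.ReflTransGen StepC

/-- `t ⇒ v`: `t` reduces in finitely many steps to the value `v`. -/
def StepsV (t : C) (v : V) : Prop := ∃ t', StepsC t t' ∧ StepV t' v

/-- `t⇓`: the computation `t` reduces to some value. -/
def ConvC (t : C) : Prop := ∃ v, StepsV t v

/-- Applicative simulations for xCL_fg. -/
def IsSim (RV : V → V → Prop) (RC : C → C → Prop) : Prop :=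
  (∀ v w, RV v w → ∀ u t, LStep v u t → ∃ s, LStep w u s ∧ RC t s) ∧
  (∀ t s, RC t s →
    (∀ v, StepV t v → ∃ w, StepsV s w ∧ RV v w) ∧
    (∀ t', StepC t t' → ∃ s', StepsC s s' ∧ RC t' s'))

/-- Applicative similarity on values. -/
def AppSimV (v w : V) : Prop := ∃ RV RC, IsSim RV RC ∧ RV v w

/-- Applicative similarity on computations. -/
def AppSimC (t s : C) : Prop := ∃ RV RC, IsSim RV RC ∧ RC t s

/-- A sorted relation is a congruence if it is compatible with all operators of both sorts. -/
def IsCong (RV : V → V → Prop) (RC : C → C → Prop) : Prop :=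
  RV .S .S ∧ RV .K .K ∧ RV .I .I ∧
  (∀ t s, RC t s → RV (.K1 t) (.K1 s)) ∧
  (∀ t s, RC t s → RV (.S1 t) (.S1 s)) ∧
  (∀ t s t' s', RC t s → RC t' s' → RV (.S2 t t') (.S2 s s')) ∧
  (∀ v w, RV v w → RC (.ret v) (.ret w)) ∧
  (∀ t s t' s', RC t s → RC t' s' → RC (.bull t t') (.bull s s')) ∧
  (∀ v w t s, RV v w → RC t s → RC (.rtri v t) (.rtri w s)) ∧
  (∀ v w t s, RV v w → RC t s → RC (.ltri t v) (.ltri s w)) ∧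
  (∀ v w v' w', RV v w → RV v' w' → RC (.circ v v') (.circ w w'))

/-- Containment in the preorder `O` (the value component of `O` is total). -/
def SubO (RV : V → V → Prop) (RC : C → C → Prop) : Prop :=
  (∀ v w, RV v w → True) ∧ (∀ t s, RC t s → ConvC t → ConvC s)

/-- The contextual preorder (value sort): the greatest congruence contained in `O`. -/
def CtxLeV (v w : V) : Prop := ∃ RV RC, IsCong RV RC ∧ SubO RV RC ∧ RV v w

/-- The contextual preorder (computation sort). -/
def CtxLeC (t s : C) : Prop := ∃ RV RC, IsCong RV RC ∧ SubO RV RC ∧ RC t s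

/-- The step-indexed approximations `Lⁿ = (Lⁿ_v, Lⁿ_c)`. -/
def LrelN : ℕ → (V → V → Prop) × (C → C → Prop)
  | 0 => (fun _ _ => True, fun _ _ => True)
  | n+1 =>
    ( fun v w => ∀ u z, (LrelN n).1 u z → ∀ t, LStep v u t →
        ∃ s, LStep w z s ∧ (LrelN n).2 t s,
      fun t s =>
        (∀ v, StepV t v → ∃ w, StepsV s w ∧ (LrelN n).1 v w) ∧
        (∀ t', StepC t t' → ∃ s', StepsC s s' ∧ (LrelN n).2 t' s') )

/-- The step-indexed logical relation, value sort: `L_v = ⋂ₙ Lⁿ_v`. -/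
def LV (v w : V) : Prop := ∀ n, (LrelN n).1 v w

/-- The step-indexed logical relation, computation sort: `L_c = ⋂ₙ Lⁿ_c`. -/
def LC (t s : C) : Prop := ∀ n, (LrelN n).2 t s

/-! ### Auxiliary development for the β-law -/

mutual
/-- Congruence closure (value sort) of the single pair `(v ∘ w, t)` in both directions. -/
inductive BV (v w : V) (t : C) : V → V → Prop
  | S : BV v w t .S .S
  | K : BV v w t .K .K
  | I : BV v w t .I .I
  | K1 {a b : C} : BC v w t a b → BV v w t (.K1 a) (.K1 b)
  | S1 {a b : C} : BC v w t a b → BV v w t (.S1 a) (.S1 b)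
  | S2 {a b a' b' : C} : BC v w t a a' → BC v w t b b' → BV v w t (.S2 a b) (.S2 a' b')
/-- Congruence closure (computation sort) of the single pair `(v ∘ w, t)` in both directions. -/
inductive BC (v w : V) (t : C) : C → C → Prop
  | ret {a b : V} : BV v w t a b → BC v w t (.ret a) (.ret b)
  | bull {a a' b b' : C} : BC v w t a a' → BC v w t b b' → BC v w t (.bull a b) (.bull a' b')
  | rtri {x y : V} {a b : C} : BV v w t x y → BC v w t a b → BC v w t (.rtri x a) (.rtri y b)
  | ltri {x y : V} {a b : C} : BV v w t x y → BC v w t a b → BC v w t (.ltri a x) (.ltri b y)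
  | circ {x y x' y' : V} : BV v w t x x' → BV v w t y y' → BC v w t (.circ x y) (.circ x' y')
  | beta1 : BC v w t (.circ v w) t
  | beta2 : BC v w t t (.circ v w)
end

mutual
theorem BV_refl (v w : V) (t : C) : ∀ u, BV v w t u u
  | .I => .I
  | .K => .K
  | .S => .S
  | .K1 a => .K1 (BC_refl v w t a)
  | .S1 a => .S1 (BC_refl v w t a)
  | .S2 a b => .S2 (BC_refl v w t a) (BC_refl v w t b)
theorem BC_refl (v w : V) (t : C) : ∀ c, BC v w t c c
  | .ret a => .ret (BV_refl v w t a)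
  | .bull a b => .bull (BC_refl v w t a) (BC_refl v w t b)
  | .rtri x a => .rtri (BV_refl v w t x) (BC_refl v w t a)
  | .ltri a x => .ltri (BV_refl v w t x) (BC_refl v w t a)
  | .circ x y => .circ (BV_refl v w t x) (BV_refl v w t y)
end

theorem LStep.det {v u : V} {t t' : C} (h : LStep v u t) (h' : LStep v u t') : t = t' := by
  cases h <;> cases h' <;> rfl

theorem simV {v w : V} {t : C} {a a' : V} (h : BV v w t a a') {u : V} {c : C}
    (hs : LStep a u c) {u' : V} (hu : BV v w t u u') :
    ∃ c', LStep a' u' c' ∧ BC v w t c c' := by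
  cases h with
  | S => cases hs; exact ⟨_, .S _, .ret (.S1 (.ret hu))⟩
  | K => cases hs; exact ⟨_, .K _, .ret (.K1 (.ret hu))⟩
  | I => cases hs; exact ⟨_, .I _, .ret hu⟩
  | K1 hab => cases hs; exact ⟨_, .K1 _ _, hab⟩
  | S1 hab => cases hs; exact ⟨_, .S1 _ _, .ret (.S2 hab (.ret hu))⟩
  | S2 ha hb => cases hs; exact ⟨_, .S2 _ _ _, .bull (.ltri hu ha) (.ltri hu hb)⟩

theorem stepsC_lift {f : C → C} (hf : ∀ a b, StepC a b → StepC (f a) (f b))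
    {a b : C} (h : StepsC a b) : StepsC (f a) (f b) :=
  Relation.ReflTransGen.lift f hf _ _ h

theorem simCV {v w : V} {t : C} (hβ : LStep v w t) {c c' : C} (h : BC v w t c c') {x : V}
    (hs : StepV c x) : ∃ x', StepsV c' x' ∧ BV v w t x x' := by
  cases hs with
  | ret =>
    cases h with
    | ret ha => exact ⟨_, ⟨_, Relation.ReflTransGen.refl, .ret _⟩, ha⟩
    | beta2 =>
      exact ⟨x, ⟨.ret x, Relation.ReflTransGen.single (.circ hβ), .ret x⟩, BV_refl _ _ _ x⟩

theorem simCC {v w : V} {t : C} (hβ : LStep v w t) {c c₁ : C} (hs : StepC c c₁) :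
    ∀ {c' : C}, BC v w t c c' → ∃ c₁', StepsC c' c₁' ∧ BC v w t c₁ c₁' := by
  induction hs with
  | bullL s hst ih =>
    intro c' h
    cases h with
    | bull ha hb =>
      obtain ⟨a₁', hsteps, hB⟩ := ih ha
      exact ⟨_, stepsC_lift (fun _ _ h => StepC.bullL _ h) hsteps, .bull hB hb⟩
    | beta2 =>
      exact ⟨_, (Relation.ReflTransGen.single (.circ hβ)).tail (.bullL s hst),
        BC_refl _ _ _ _⟩
  | bullV s hv =>
    intro c' h
    cases h with
    | bull ha hb =>
      obtain ⟨x', ⟨a'', hsteps, hval⟩, hBV⟩ := simCV hβ ha hv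
      exact ⟨_, (stepsC_lift (fun _ _ h => StepC.bullL _ h) hsteps).tail (.bullV _ hval),
        .rtri hBV hb⟩
    | beta2 =>
      exact ⟨_, (Relation.ReflTransGen.single (.circ hβ)).tail (.bullV s hv),
        BC_refl _ _ _ _⟩
  | ltriL u hst ih =>
    intro c' h
    cases h with
    | ltri hx ha =>
      obtain ⟨a₁', hsteps, hB⟩ := ih ha
      exact ⟨_, stepsC_lift (fun _ _ h => StepC.ltriL _ h) hsteps, .ltri hx hB⟩
    | beta2 =>
      exact ⟨_, (Relation.ReflTransGen.single (.circ hβ)).tail (.ltriL u hst),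
        BC_refl _ _ _ _⟩
  | ltriV u hv =>
    intro c' h
    cases h with
    | ltri hx ha =>
      obtain ⟨x', ⟨a'', hsteps, hval⟩, hBV⟩ := simCV hβ ha hv
      exact ⟨_, (stepsC_lift (fun _ _ h => StepC.ltriL _ h) hsteps).tail (.ltriV _ hval),
        .circ hBV hx⟩
    | beta2 =>
      exact ⟨_, (Relation.ReflTransGen.single (.circ hβ)).tail (.ltriV u hv),
        BC_refl _ _ _ _⟩
  | rtriR u hst ih =>
    intro c' h
    cases h with
    | rtri hx ha =>
      obtain ⟨a₁', hsteps, hB⟩ := ih ha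
      exact ⟨_, stepsC_lift (fun _ _ h => StepC.rtriR _ h) hsteps, .rtri hx hB⟩
    | beta2 =>
      exact ⟨_, (Relation.ReflTransGen.single (.circ hβ)).tail (.rtriR u hst),
        BC_refl _ _ _ _⟩
  | rtriV u hv =>
    intro c' h
    cases h with
    | rtri hx ha =>
      obtain ⟨x', ⟨a'', hsteps, hval⟩, hBV⟩ := simCV hβ ha hv
      exact ⟨_, (stepsC_lift (fun _ _ h => StepC.rtriR _ h) hsteps).tail (.rtriV _ hval),
        .circ hx hBV⟩
    | beta2 =>
      exact ⟨_, (Relation.ReflTransGen.single (.circ hβ)).tail (.rtriV u hv),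
        BC_refl _ _ _ _⟩
  | circ hls =>
    intro c' h
    cases h with
    | circ hx hy =>
      obtain ⟨c₁', hstep, hB⟩ := simV hx hls hy
      exact ⟨_, Relation.ReflTransGen.single (.circ hstep), hB⟩
    | beta1 =>
      cases hls.det hβ
      exact ⟨t, Relation.ReflTransGen.refl, BC_refl v w t t⟩
    | beta2 =>
      exact ⟨_, (Relation.ReflTransGen.single (.circ hβ)).tail (.circ hls),
        BC_refl _ _ _ _⟩

theorem conv_lemma {v w : V} {t : C} (hβ : LStep v w t) :
    ∀ {c c'' : C}, StepsC c c'' → ∀ {x : V}, StepV c'' x → ∀ {c' : C},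
      BC v w t c c' → ConvC c' := by
  intro c c'' hsteps
  induction hsteps using Relation.ReflTransGen.head_induction_on with
  | refl =>
    intro x hv c' h
    obtain ⟨x', hx', _⟩ := simCV hβ h hv
    exact ⟨x', hx'⟩
  | head hstep _ ih =>
    intro x hv c' h
    obtain ⟨c₁', hs', hB⟩ := simCC hβ hstep h
    obtain ⟨y, c₂, hs₂, hv₂⟩ := ih hv hB
    exact ⟨y, c₂, hs'.trans hs₂, hv₂⟩

theorem B_cong (v w : V) (t : C) : IsCong (BV v w t) (BC v w t) :=
  ⟨.S, .K, .I, fun _ _ h => .K1 h, fun _ _ h => .S1 h, fun _ _ _ _ h h' => .S2 h h',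
   fun _ _ h => .ret h, fun _ _ _ _ h h' => .bull h h', fun _ _ _ _ h h' => .rtri h h',
   fun _ _ _ _ h h' => .ltri h h', fun _ _ _ _ h h' => .circ h h'⟩

theorem B_subO {v w : V} {t : C} (hβ : LStep v w t) : SubO (BV v w t) (BC v w t) := by
  refine ⟨fun _ _ _ => trivial, fun c c' hB hc => ?_⟩
  obtain ⟨x, c'', hs, hv⟩ := hc
  exact conv_lemma hβ hs hv hB

end FG

open FG in
/-- β-law for xCL_fg. -/
theorem fg_beta_law :
    ∀ (v w : V) (t : C), LStep v w t →
      CtxLeC (.circ v w) t ∧ CtxLeC t (.circ v w) := by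
  intro v w t h
  exact ⟨⟨BV v w t, BC v w t, B_cong v w t, B_subO h, .beta1⟩,
         ⟨BV v w t, BC v w t, B_cong v w t, B_subO h, .beta2⟩⟩
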